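/- arXiv:1612.07661 — 2 statements merged into one kernel-verified Lean document; each statement's English description precedes it below -/
import Mathlib

section
/- Characterization of stationary solutions (necessity): let (m, w, f) be a stationary solution of the continuous Petri net dynamics (m constant, w affine nonnegative, f constant) satisfying ṁ = C⁺ f − m/τ, ẇ = m/τ − C⁻ f, and the policy-form flow equation f = inf over policies π with S_π w(t) = 0 of (C⁻_π)^{-1} S_π (m/τ), where the infimum is attained by some policy at each time. Then: (a) m/τ = C⁺ f; (b) ẇ = m/τ − C⁻ f; (c) C f ≥ 0; and (d) there exists a policy π* such that S_{π*} w(t) = 0 for all t and (S_{π*} C⁺ − C⁻_{π*}) f = 0. -/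
open Matrix

/-- characterization of stationary solutions (necessity).
Policies are maps `π : Q → P` choosing an upstream place `π q ∈ q^in` of each
transition; `S_π` is the 0/1 selection matrix and `C⁻_π` the invertible policy
downstream flow matrix. A stationary solution (constant `m`, affine nonnegative
`w`, constant `f`) whose flow is the attained infimum over admissible policies of
`(C⁻_π)⁻¹ S_π (m/τ)` satisfies: (a) `m/τ = C⁺ f`; (b) `ẇ = m/τ − C⁻ f`;
(c) `C f ≥ 0`; (d) there is a policy `π*` with `S_{π*} w(t) = 0` for all `t ≥ 0`
and `(S_{π*} C⁺ − C⁻_{π*}) f = 0`. -/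
theorem stationary_characterization_necessity
    {P Q : Type*} [Fintype P] [Fintype Q] [DecidableEq P] [DecidableEq Q]
    (qin : Q → Finset P)
    (Cplus Cminus : Matrix P Q ℝ) (τ : P → ℝ) (hτ : ∀ p, 0 < τ p)
    (Cm : (Q → P) → Matrix Q Q ℝ)
    (hCm : ∀ π : Q → P, IsUnit (Cm π).det)
    (S : (Q → P) → Matrix Q P ℝ)
    (hS : ∀ π, S π = Matrix.of fun q p => if p = π q then (1 : ℝ) else 0)
    (m : P → ℝ) (w0 wdot : P → ℝ) (f : Q → ℝ)
    (hm_nonneg : ∀ p, 0 ≤ m p)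
    (hw_nonneg : ∀ t : ℝ, 0 ≤ t → ∀ p, 0 ≤ w0 p + t * wdot p)
    -- `ṁ = C⁺ f − m/τ` with `m` constant, i.e. `ṁ = 0`:
    (hmdot : (0 : P → ℝ) = Cplus *ᵥ f - fun p => m p / τ p)
    -- `ẇ = m/τ − C⁻ f`:
    (hwdot : wdot = (fun p => m p / τ p) - Cminus *ᵥ f)
    -- the policy-form flow equation, with attained infimum, at every time `t ≥ 0`:
    (hinf : ∀ t : ℝ, 0 ≤ t →
      (∀ π : Q → P, (∀ q, π q ∈ qin q) →
        S π *ᵥ (fun p => w0 p + t * wdot p) = 0 →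
        ∀ q, f q ≤ ((Cm π)⁻¹ *ᵥ (S π *ᵥ fun p => m p / τ p)) q) ∧
      (∃ π : Q → P, (∀ q, π q ∈ qin q) ∧
        S π *ᵥ (fun p => w0 p + t * wdot p) = 0 ∧
        f = (Cm π)⁻¹ *ᵥ (S π *ᵥ fun p => m p / τ p))) :
    (fun p => m p / τ p) = Cplus *ᵥ f ∧
    wdot = (fun p => m p / τ p) - Cminus *ᵥ f ∧
    (∀ p, 0 ≤ ((Cplus - Cminus) *ᵥ f) p) ∧
    (∃ π : Q → P, (∀ q, π q ∈ qin q) ∧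
      (∀ t : ℝ, 0 ≤ t → S π *ᵥ (fun p => w0 p + t * wdot p) = 0) ∧
      (S π * Cplus - Cm π) *ᵥ f = 0) := by

  have ha : (fun p => m p / τ p) = Cplus *ᵥ f := by
    have := hmdot
    funext p
    have h := congrFun hmdot p
    simp [Pi.sub_apply] at h
    linarith [h]
  have hw0 : ∀ p, 0 ≤ w0 p := by
    intro p; have := hw_nonneg 0 le_rfl p; simpa using this
  have hwd : ∀ p, 0 ≤ wdot p := by
    intro p
    by_contra h
    push_neg at h
    have hpos : (0:ℝ) < -wdot p := by linarith
    have ht : (0:ℝ) ≤ (w0 p + 1) / (-wdot p) := div_nonneg (by linarith [hw0 p]) hpos.le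
    have h2 := hw_nonneg _ ht p
    have hne : -wdot p ≠ 0 := ne_of_gt hpos
    have key : (w0 p + 1) / -wdot p * wdot p = -(w0 p + 1) := by
      field_simp
      rw [mul_div_cancel_right₀ _ (neg_ne_zero.mp hne)]
    rw [key] at h2
    linarith
  refine ⟨ha, hwdot, ?_, ?_⟩
  · intro p
    have : ((Cplus - Cminus) *ᵥ f) p = wdot p := by
      rw [hwdot, ha]
      simp [Matrix.sub_mulVec]
    rw [this]; exact hwd p
  · obtain ⟨-, π, hπin, hπ0, hπf⟩ := hinf 1 zero_le_one
    have hSv : ∀ v : P → ℝ, ∀ q, (S π *ᵥ v) q = v (π q) := by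
      intro v q
      simp [hS, Matrix.mulVec, dotProduct]
    have hzero : ∀ q, w0 (π q) = 0 ∧ wdot (π q) = 0 := by
      intro q
      have h := congrFun hπ0 q
      rw [hSv] at h
      simp at h
      constructor <;> nlinarith [hw0 (π q), hwd (π q)]
    refine ⟨π, hπin, ?_, ?_⟩
    · intro t ht
      funext q
      rw [hSv]
      have := hzero q
      simp [this.1, this.2]
    · have hCmf : Cm π *ᵥ f = S π *ᵥ fun p => m p / τ p := by
        rw [hπf, Matrix.mulVec_mulVec, Matrix.mul_nonsing_inv _ (hCm π), Matrix.one_mulVec]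
      funext q
      have : (S π * Cplus) *ᵥ f = S π *ᵥ (Cplus *ᵥ f) := by
        rw [Matrix.mulVec_mulVec]
      rw [Matrix.sub_mulVec]
      simp only [Pi.sub_apply, Pi.zero_apply, this, ← ha, hCmf]
      ring
end

section
/- Determination of the stationary flow by the initial marking: suppose a trajectory of the continuous Petri net converges to a stationary solution (m^∞, w^∞, f^∞), a fixed policy π attains the infimum at all times (so S_π ṁ(t) = (S_π C⁺ − C⁻_π) f(t) and S_π m(t) = D_π C⁻_π f(t) for all t), and 0 is a semi-simple eigenvalue of S_π C⁺ − C⁻_π. Let Q be the projection onto ker((S_π C⁺ (C⁻_π)^{-1} − I) D_π^{-1}) along its range. Then f^∞ = (C⁻_π)^{-1} D_π^{-1} Q S_π m(0); in particular f^∞ is uniquely determined by the initial marking m(0). -/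
open Matrix Filter

/-- determination of the stationary flow by the initial marking.
Suppose the trajectory converges to a stationary solution `f∞`, a fixed policy
`π` attains the infimum at all times (so `S_π ṁ = (S_π C⁺ − C⁻_π) f` and
`S_π m = D_π C⁻_π f`), and `0` is a semi-simple eigenvalue of `S_π C⁺ − C⁻_π`.
With `Qproj` the projection onto `ker((S_π C⁺ (C⁻_π)⁻¹ − I) D_π⁻¹)` along its
range, we have `f∞ = (C⁻_π)⁻¹ D_π⁻¹ Qproj (S_π m(0))`. -/
theorem stationary_flow_determined_by_initial_marking
    {P Q : Type*} [Fintype P] [Fintype Q] [DecidableEq P] [DecidableEq Q]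
    (S : Matrix Q P ℝ) (Cplus : Matrix P Q ℝ) (Cπ Dπ : Matrix Q Q ℝ)
    (hCπ : IsUnit Cπ.det) (hDπ : IsUnit Dπ.det)
    (m : ℝ → P → ℝ) (f : ℝ → Q → ℝ) (finf : Q → ℝ)
    -- the constant-policy dynamics holds at all times:
    (hmdot : ∀ t (q : Q), HasDerivAt (fun s => (S *ᵥ m s) q)
      (((S * Cplus - Cπ) *ᵥ f t) q) t)
    (hmark : ∀ t, S *ᵥ m t = (Dπ * Cπ) *ᵥ f t)
    -- convergence towards the stationary solution:
    (hconv : Tendsto f atTop (nhds finf))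
    -- stationarity of `f∞`:
    (hstat : (S * Cplus - Cπ) *ᵥ finf = 0)
    -- `0` is a semi-simple eigenvalue of `S_π C⁺ − C⁻_π`:
    (hss : IsCompl (LinearMap.ker (S * Cplus - Cπ).mulVecLin)
      (LinearMap.range (S * Cplus - Cπ).mulVecLin))
    -- `Qproj` is the projection onto the kernel of
    -- `(S_π C⁺ (C⁻_π)⁻¹ − I) D_π⁻¹` along its range:
    (Qproj : (Q → ℝ) →ₗ[ℝ] (Q → ℝ))
    (hQker : ∀ v ∈ LinearMap.ker ((S * Cplus * Cπ⁻¹ - 1) * Dπ⁻¹).mulVecLin,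
      Qproj v = v)
    (hQran : ∀ v ∈ LinearMap.range ((S * Cplus * Cπ⁻¹ - 1) * Dπ⁻¹).mulVecLin,
      Qproj v = 0) :
    finf = (Cπ⁻¹ * Dπ⁻¹) *ᵥ Qproj (S *ᵥ m 0) := by
  -- key matrix identity: B * (Dπ * Cπ) = S*Cplus - Cπ
  have hB : ((S * Cplus * Cπ⁻¹ - 1) * Dπ⁻¹) * (Dπ * Cπ) = S * Cplus - Cπ := by
    rw [Matrix.mul_assoc, ← Matrix.mul_assoc Dπ⁻¹, Matrix.nonsing_inv_mul _ hDπ,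
      Matrix.one_mul, Matrix.sub_mul, Matrix.one_mul, Matrix.mul_assoc,
      Matrix.nonsing_inv_mul _ hCπ, Matrix.mul_one]
  -- every value (S*Cplus - Cπ) *ᵥ v is killed by Qproj
  have hQzero : ∀ v : Q → ℝ, Qproj ((S * Cplus - Cπ) *ᵥ v) = 0 := by
    intro v
    apply hQran
    refine ⟨(Dπ * Cπ) *ᵥ v, ?_⟩
    rw [Matrix.mulVecLin_apply, Matrix.mulVec_mulVec, hB]
  set L := LinearMap.toContinuousLinearMap Qproj with hL
  -- Qproj (S *ᵥ m t) has zero derivative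
  have hd : ∀ t : ℝ, HasDerivAt (fun s => L (S *ᵥ m s)) 0 t := by
    intro t
    have h1 : HasDerivAt (fun s => S *ᵥ m s) ((S * Cplus - Cπ) *ᵥ f t) t :=
      hasDerivAt_pi.2 (hmdot t)
    have h2 := (L.hasFDerivAt.comp_hasDerivAt t h1)
    simpa [hL, hQzero, Function.comp_def] using h2
  -- hence constant
  have hconst : ∀ t : ℝ, L (S *ᵥ m t) = L (S *ᵥ m 0) := by
    intro t
    exact is_const_of_deriv_eq_zero (fun s => (hd s).differentiableAt)
      (fun s => (hd s).deriv) t 0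
  -- take limits
  have htend1 : Tendsto (fun t => L (S *ᵥ m t)) atTop
      (nhds (L ((Dπ * Cπ) *ᵥ finf))) := by
    have hcont : Continuous fun v : Q → ℝ => L ((Dπ * Cπ) *ᵥ v) :=
      L.continuous.comp (Dπ * Cπ).mulVecLin.toContinuousLinearMap.continuous
    have := (hcont.continuousAt (x := finf)).tendsto.comp hconv
    simpa [hmark, Function.comp_def] using this
  have htend2 : Tendsto (fun _ : ℝ => L (S *ᵥ m 0)) atTop
      (nhds (L (S *ᵥ m 0))) := tendsto_const_nhds
  have hkey : L (S *ᵥ m 0) = L ((Dπ * Cπ) *ᵥ finf) := by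
    refine tendsto_nhds_unique ?_ htend1
    simpa only [hconst] using htend2
  -- Dπ*Cπ*finf is in the kernel
  have hker : Qproj ((Dπ * Cπ) *ᵥ finf) = (Dπ * Cπ) *ᵥ finf := by
    apply hQker
    rw [LinearMap.mem_ker, Matrix.mulVecLin_apply, Matrix.mulVec_mulVec, hB, hstat]
  have hLQ : (Qproj (S *ᵥ m 0) : Q → ℝ) = (Dπ * Cπ) *ᵥ finf := by
    have : L (S *ᵥ m 0) = (Dπ * Cπ) *ᵥ finf := hkey.trans (by simpa [hL] using hker)
    simpa [hL] using this
  rw [hLQ, Matrix.mulVec_mulVec, Matrix.mul_assoc Cπ⁻¹, ← Matrix.mul_assoc Dπ⁻¹,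
    Matrix.nonsing_inv_mul _ hDπ, Matrix.one_mul, Matrix.nonsing_inv_mul _ hCπ,
    Matrix.one_mulVec]
end
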